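/- Let n ≥ 2 and set ν = (n−2)/2. Let P be a homogeneous polynomial of degree ℓ in n variables with ΔP = 0. Then the function f : ℝ^n → ℝ defined for x ≠ 0 by f(x) = P(x) · J_{ℓ+ν}(|x|) / |x|^{ℓ+ν} extends to a smooth function on all of ℝ^n, and this extension satisfies Δf + f = 0 on ℝ^n. -/

import Mathlib

open MeasureTheory Real

noncomputable section

/-- The Laplacian of a polynomial in `n` variables. -/
def polyLaplacian {n : ℕ} (P : MvPolynomial (Fin n) ℝ) : MvPolynomial (Fin n) ℝ :=
  ∑ i : Fin n, MvPolynomial.pderiv i (MvPolynomial.pderiv i P)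

/-- The Euclidean Laplacian `Δf = Σᵢ ∂²f/∂xᵢ²` of a function on `ℝ^n`. -/
def laplacian {n : ℕ} (f : EuclideanSpace ℝ (Fin n) → ℝ) (x : EuclideanSpace ℝ (Fin n)) : ℝ :=
  ∑ i : Fin n,
    fderiv ℝ (fun y => fderiv ℝ f y (EuclideanSpace.single i 1)) x (EuclideanSpace.single i 1)

/-- The Bessel function of the first kind `J_μ`, via its power series. -/
def besselJ (μ : ℝ) (r : ℝ) : ℝ :=
  ∑' k : ℕ, ((-1 : ℝ) ^ k / (k.factorial * Real.Gamma (k + μ + 1))) * (r / 2) ^ (2 * (k : ℝ) + μ)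

set_option maxHeartbeats 1000000

open MvPolynomial



def pS (c : ℕ → ℝ) (t : ℝ) : ℝ := ∑' k, c k * t ^ k

def pD (c : ℕ → ℝ) : ℕ → ℝ := fun k => ((k : ℝ) + 1) * c (k + 1)

def goodc (c : ℕ → ℝ) : Prop := ∀ R : ℝ, 0 < R → Summable fun k => |c k| * R ^ k

lemma goodc_of_rec {c : ℕ → ℝ} (h : ∀ k : ℕ, ((k : ℝ) + 1) * |c (k + 1)| ≤ |c k|) :
    goodc c := by
  intro R hR
  have hb : ∀ k : ℕ, |c k| ≤ |c 0| / k.factorial := by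
    intro k
    induction k with
    | zero => simp
    | succ k ih =>
      have hk1 : (0:ℝ) < (k : ℝ) + 1 := by positivity
      have h2 : |c (k+1)| ≤ |c k| / ((k:ℝ)+1) := by
        rw [le_div_iff₀ hk1]; linarith [h k]
      have h3 : |c k| / ((k:ℝ)+1) ≤ (|c 0| / k.factorial) / ((k:ℝ)+1) := by gcongr
      have h4 : (|c 0| / k.factorial) / ((k:ℝ)+1) = |c 0| / (k+1).factorial := by
        rw [Nat.factorial_succ, div_div]
        push_cast; ring_nf
      linarith
  have key : ∀ k : ℕ, |c k| * R ^ k ≤ |c 0| * (R ^ k / k.factorial) := by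
    intro k
    have hRk : (0:ℝ) ≤ R ^ k := by positivity
    calc |c k| * R ^ k ≤ (|c 0| / k.factorial) * R ^ k :=
          mul_le_mul_of_nonneg_right (hb k) hRk
      _ = |c 0| * (R ^ k / k.factorial) := by ring
  exact Summable.of_nonneg_of_le (fun k => by positivity) key
    ((Real.summable_pow_div_factorial R).mul_left _)

lemma goodc.pd {c : ℕ → ℝ} (hc : goodc c) : goodc (pD c) := by
  intro R hR
  have key : ∀ k : ℕ, |pD c k| * R ^ k ≤ R⁻¹ * (|c (k + 1)| * (2 * R) ^ (k + 1)) := by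
    intro k
    have h1 : ((k:ℝ) + 1) ≤ 2 ^ (k+1) := by
      have := (Nat.lt_two_pow_self (n := k+1)).le
      exact_mod_cast this
    have h2 : |pD c k| = ((k:ℝ)+1) * |c (k+1)| := by
      rw [pD, abs_mul, abs_of_nonneg (by positivity : (0:ℝ) ≤ (k:ℝ)+1)]
    rw [h2, mul_pow]
    have h3 : R⁻¹ * (|c (k + 1)| * ((2:ℝ) ^ (k+1) * R ^ (k + 1)))
        = (2:ℝ)^(k+1) * |c (k+1)| * R ^ k := by
      field_simp; ring
    rw [h3]
    have := mul_le_mul_of_nonneg_right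
      (mul_le_mul_of_nonneg_right h1 (abs_nonneg (c (k+1))))
      (by positivity : (0:ℝ) ≤ R ^ k)
    linarith
  have hs : Summable fun k : ℕ => R⁻¹ * (|c (k + 1)| * (2 * R) ^ (k + 1)) := by
    apply Summable.mul_left
    exact (summable_nat_add_iff 1).2 (hc (2*R) (by linarith))
  exact Summable.of_nonneg_of_le (fun k => by positivity) key hs

lemma goodc.summable_abs {c : ℕ → ℝ} (hc : goodc c) (t : ℝ) :
    Summable fun k => |c k * t ^ k| := by
  have hR : (0:ℝ) < |t| + 1 := by positivity
  have key : ∀ k : ℕ, |c k * t ^ k| ≤ |c k| * (|t|+1) ^ k := by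
    intro k
    rw [abs_mul, abs_pow]
    exact mul_le_mul_of_nonneg_left
      (pow_le_pow_left₀ (abs_nonneg t) (by linarith) k) (abs_nonneg _)
  exact Summable.of_nonneg_of_le (fun k => abs_nonneg _) key (hc _ hR)

lemma goodc.summable {c : ℕ → ℝ} (hc : goodc c) (t : ℝ) :
    Summable fun k => c k * t ^ k := (hc.summable_abs t).of_abs

lemma goodc.hasDerivAt {c : ℕ → ℝ} (hc : goodc c) (t : ℝ) :
    HasDerivAt (pS c) (pS (pD c) t) t := by
  set R : ℝ := |t| + 1 with hRdef
  have hR : 0 < R := by positivity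
  have ht : t ∈ Metric.ball (0:ℝ) R := by
    simp only [Metric.mem_ball, Real.dist_eq, sub_zero, hRdef]
    linarith [abs_nonneg t]
  have h0 : (0:ℝ) ∈ Metric.ball (0:ℝ) R := by
    simp only [Metric.mem_ball, dist_self]; exact hR
  have hu : Summable fun k : ℕ => (k:ℝ) * |c k| * R ^ (k - 1) := by
    apply (summable_nat_add_iff 1).1
    apply ((hc.pd) R hR).congr
    intro k
    rw [pD, abs_mul, abs_of_nonneg (by positivity : (0:ℝ) ≤ (k:ℝ)+1)]
    push_cast
    simp [mul_assoc]
  have main : HasDerivAt (pS c) (∑' k : ℕ, (k:ℝ) * c k * t ^ (k - 1)) t := by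
    apply hasDerivAt_tsum_of_isPreconnected hu Metric.isOpen_ball
      (convex_ball (0:ℝ) R).isPreconnected
      (g := fun k y => c k * y ^ k)
      (g' := fun k y => (k:ℝ) * c k * y ^ (k - 1))
      (y₀ := 0) ?_ ?_ h0 ?_ ht
    · intro k y _
      have h1 := (hasDerivAt_pow k y).const_mul (c k)
      exact h1.congr_deriv (by ring)
    · intro k y hy
      have hyR : |y| ≤ R := by
        simp only [Metric.mem_ball, Real.dist_eq, sub_zero] at hy
        linarith
      rw [Real.norm_eq_abs, abs_mul, abs_mul, abs_pow,
        Nat.abs_cast]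
      exact mul_le_mul_of_nonneg_left
        (pow_le_pow_left₀ (abs_nonneg y) hyR _) (by positivity)
    · apply summable_of_ne_finset_zero (s := {0})
      intro k hk
      simp only [Finset.mem_singleton] at hk
      have : k ≠ 0 := hk
      simp [zero_pow this]
  have hsum : Summable fun k : ℕ => (k:ℝ) * c k * t ^ (k - 1) := by
    apply (summable_nat_add_iff 1).1
    apply ((hc.pd).summable t).congr
    intro k
    rw [pD]
    push_cast
    simp [mul_assoc]
  have heq : (∑' k : ℕ, (k:ℝ) * c k * t ^ (k - 1)) = pS (pD c) t := by
    rw [Summable.tsum_eq_zero_add hsum]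
    simp only [Nat.cast_zero, zero_mul, zero_add, Nat.add_sub_cancel, pS, pD]
    apply tsum_congr
    intro k
    push_cast
    ring
  rw [heq] at main
  exact main

lemma goodc.contDiff {c : ℕ → ℝ} (hc : goodc c) : ContDiff ℝ (⊤ : ℕ∞) (pS c) := by
  rw [contDiff_infty]
  intro m
  induction m generalizing c with
  | zero =>
    rw [show ((0:ℕ) : WithTop ℕ∞) = 0 by norm_cast]
    apply contDiff_zero.2
    exact continuous_iff_continuousAt.2 fun t => (hc.hasDerivAt t).continuousAt
  | succ m ih =>
    rw [show ((m+1:ℕ) : WithTop ℕ∞) = ((m:ℕ) : WithTop ℕ∞) + 1 by norm_cast]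
    rw [contDiff_succ_iff_deriv]
    refine ⟨fun t => (hc.hasDerivAt t).differentiableAt, ?_, ?_⟩
    · intro h; exact absurd h (by simp)
    · have : deriv (pS c) = pS (pD c) := funext fun t => (hc.hasDerivAt t).deriv
      rw [this]
      exact ih hc.pd




variable {n : ℕ}

def pe (P : MvPolynomial (Fin n) ℝ) (x : EuclideanSpace ℝ (Fin n)) : ℝ :=
  MvPolynomial.eval (fun i => x i) P

lemma pe_contDiff (P : MvPolynomial (Fin n) ℝ) : ContDiff ℝ (⊤ : ℕ∞) (pe P) := by
  induction P using MvPolynomial.induction_on with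
  | C a =>
    have h1 : pe (C a) = fun _ : EuclideanSpace ℝ (Fin n) => a := by funext y; simp [pe]
    rw [h1]; exact contDiff_const
  | add p q hp hq =>
    have h1 : pe (p + q) = fun y => pe p y + pe q y := by funext y; simp [pe]
    rw [h1]; exact hp.add hq
  | mul_X p i hp =>
    have h1 : pe (p * X i) = fun x => pe p x * (EuclideanSpace.proj (𝕜 := ℝ) i) x := by
      funext x; simp [pe]
    rw [h1]
    exact hp.mul (EuclideanSpace.proj (𝕜 := ℝ) i).contDiff

lemma pe_hasFDerivAt (P : MvPolynomial (Fin n) ℝ) (x : EuclideanSpace ℝ (Fin n)) :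
    HasFDerivAt (pe P)
      (∑ i, pe (pderiv i P) x • (EuclideanSpace.proj i : EuclideanSpace ℝ (Fin n) →L[ℝ] ℝ)) x := by
  induction P using MvPolynomial.induction_on with
  | C a =>
    have h1 : pe (C a) = fun _ : EuclideanSpace ℝ (Fin n) => a := by funext y; simp [pe]
    rw [h1]
    have h2 : (∑ i, pe (pderiv i (C a : MvPolynomial (Fin n) ℝ)) x •
        (EuclideanSpace.proj i : EuclideanSpace ℝ (Fin n) →L[ℝ] ℝ)) = 0 := by
      simp [pderiv_C, pe]
    rw [h2]
    exact hasFDerivAt_const a x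
  | add p q hp hq =>
    have h1 : pe (p + q) = fun y => pe p y + pe q y := by funext y; simp [pe]
    rw [h1]
    refine (hp.add hq).congr_fderiv (Eq.symm ?_)
    rw [← Finset.sum_add_distrib]
    congr 1; funext i
    simp [pe, add_smul]
  | mul_X p i hp =>
    have h1 : pe (p * X i) = fun y => pe p y * (EuclideanSpace.proj (𝕜 := ℝ) i) y := by
      funext y; simp [pe]
    rw [h1]
    have h2 := hp.mul ((EuclideanSpace.proj (𝕜 := ℝ) i).hasFDerivAt (x := x))
    refine h2.congr_fderiv (Eq.symm ?_)
    ext v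
    simp only [ContinuousLinearMap.coe_sum', Finset.sum_apply,
      ContinuousLinearMap.smul_apply, ContinuousLinearMap.add_apply, PiLp.proj_apply,
      smul_eq_mul, ContinuousLinearMap.coe_smul', Pi.smul_apply]
    have expand : ∀ j, pe (pderiv j (p * X i)) x * v j
        = pe (pderiv j p) x * x i * v j + (if j = i then pe p x * v j else 0) := by
      intro j
      rw [pderiv_mul]
      by_cases hji : j = i
      · subst hji
        simp [pe, pderiv_X_self]
        ring
      · rw [pderiv_X_of_ne (fun h => hji h.symm)]
        simp [pe, hji]
    rw [Finset.sum_congr rfl (fun j _ => expand j), Finset.sum_add_distrib,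
      Finset.sum_ite_eq' Finset.univ i (fun j => pe p x * v j)]
    simp only [Finset.mem_univ, if_true]
    rw [Finset.mul_sum, add_comm]
    congr 1
    exact Finset.sum_congr rfl fun j _ => by ring

variable {n : ℕ}

lemma euler_mono (m : Fin n →₀ ℕ) (a : ℝ) (i : Fin n) :
    X i * pderiv i (monomial m a) = monomial m ((m i : ℝ) * a) := by
  rw [pderiv_monomial]
  rw [X, monomial_mul]
  by_cases hmi : m i = 0
  · simp [hmi]
  · have hs : Finsupp.single i 1 + (m - Finsupp.single i 1) = m := by
      ext j
      simp only [Finsupp.add_apply, Finsupp.single_apply, Finsupp.tsub_apply]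
      by_cases hji : i = j
      · subst hji; simp; omega
      · simp [hji]
    rw [hs]
    congr 1
    ring

lemma euler_poly {ℓ : ℕ} {P : MvPolynomial (Fin n) ℝ} (hP : P.IsHomogeneous ℓ) :
    ∑ i, X i * pderiv i P = (ℓ : ℝ) • P := by
  conv_lhs => rw [P.as_sum]
  conv_rhs => rw [P.as_sum]
  simp only [map_sum, Finset.mul_sum, Finset.smul_sum]
  rw [Finset.sum_comm]
  apply Finset.sum_congr rfl
  intro m hm
  rw [Finset.sum_congr rfl (fun i _ => euler_mono m (coeff m P) i)]
  have hdeg : (∑ i, (m i : ℝ)) = (ℓ : ℝ) := by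
    have h1 := hP (mem_support_iff.1 hm)
    have h2 : ∑ i : Fin n, m i = ℓ := by
      rw [← h1, Finsupp.weight_apply, Finsupp.sum_fintype]
      · simp
      · intro i; simp
    exact_mod_cast congrArg (Nat.cast : ℕ → ℝ) h2
  calc ∑ i, (monomial m) ((m i : ℝ) * coeff m P)
      = monomial m ((∑ i, (m i : ℝ)) * coeff m P) := by
        rw [Finset.sum_mul, map_sum]
    _ = (ℓ : ℝ) • monomial m (coeff m P) := by
        rw [hdeg, smul_monomial, smul_eq_mul]

def Qp (n : ℕ) : MvPolynomial (Fin n) ℝ := ∑ i, X i ^ 2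

def MF (A : MvPolynomial (Fin n) ℝ) (a : ℕ → ℝ) : EuclideanSpace ℝ (Fin n) → ℝ :=
  fun x => pe A x * pS a (pe (Qp n) x)

lemma pderiv_Qp (i : Fin n) : pderiv i (Qp n) = 2 * X i := by
  rw [Qp, map_sum]
  have key : ∀ j : Fin n, pderiv i (X j ^ 2) = if j = i then (2 * X i : MvPolynomial (Fin n) ℝ) else 0 := by
    intro j
    by_cases hji : j = i
    · subst hji
      rw [pderiv_pow, pderiv_X_self]
      norm_num
    · rw [pderiv_pow, pderiv_X_of_ne hji]
      simp [hji]
  rw [Finset.sum_congr rfl fun j _ => key j,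
    Finset.sum_ite_eq' Finset.univ i (fun _ => (2 * X i : MvPolynomial (Fin n) ℝ))]
  simp

lemma MF_contDiff (A : MvPolynomial (Fin n) ℝ) {a : ℕ → ℝ} (ha : goodc a) :
    ContDiff ℝ (⊤ : ℕ∞) (MF A a) :=
  (pe_contDiff A).mul (ha.contDiff.comp (pe_contDiff (Qp n)))

lemma sum_proj_apply (c : Fin n → ℝ) (j : Fin n) :
    (∑ i, c i • (EuclideanSpace.proj i : EuclideanSpace ℝ (Fin n) →L[ℝ] ℝ))
      (EuclideanSpace.single j 1) = c j := by
  simp only [ContinuousLinearMap.coe_sum', Finset.sum_apply, ContinuousLinearMap.smul_apply,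
    PiLp.proj_apply, smul_eq_mul, EuclideanSpace.single_apply]
  rw [Finset.sum_congr rfl (fun i _ => by rw [mul_ite, mul_one, mul_zero])]
  rw [Finset.sum_ite_eq' Finset.univ j c]
  simp

lemma MF_hasFDerivAt (A : MvPolynomial (Fin n) ℝ) {a : ℕ → ℝ} (ha : goodc a)
    (x : EuclideanSpace ℝ (Fin n)) :
    HasFDerivAt (MF A a)
      (∑ i, (MF (pderiv i A) a x + MF (A * pderiv i (Qp n)) (pD a) x) •
        (EuclideanSpace.proj i : EuclideanSpace ℝ (Fin n) →L[ℝ] ℝ)) x := by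
  have h1 := pe_hasFDerivAt A x
  have h2 := pe_hasFDerivAt (Qp n) x
  have h3 := (ha.hasDerivAt (pe (Qp n) x)).comp_hasFDerivAt x h2
  have h4 := h1.mul h3
  refine h4.congr_fderiv (Eq.symm ?_)
  ext v
  simp only [ContinuousLinearMap.coe_sum', Finset.sum_apply, ContinuousLinearMap.smul_apply,
    ContinuousLinearMap.add_apply, PiLp.proj_apply, smul_eq_mul, Function.comp,
    ContinuousLinearMap.coe_smul', Pi.smul_apply]
  have expand : ∀ i, (MF (pderiv i A) a x + MF (A * pderiv i (Qp n)) (pD a) x) * v i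
      = pe (pderiv i A) x * v i * pS a (pe (Qp n) x)
        + pe A x * (pS (pD a) (pe (Qp n) x) * (pe (pderiv i (Qp n)) x * v i)) := by
    intro i
    simp only [MF, pe, map_mul]
    ring
  rw [Finset.sum_congr rfl fun i _ => expand i, Finset.sum_add_distrib, ← Finset.sum_mul,
    ← Finset.mul_sum, ← Finset.mul_sum]
  ring

lemma MF_fderiv_single (A : MvPolynomial (Fin n) ℝ) {a : ℕ → ℝ} (ha : goodc a)
    (x : EuclideanSpace ℝ (Fin n)) (j : Fin n) :
    fderiv ℝ (MF A a) x (EuclideanSpace.single j 1)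
      = MF (pderiv j A) a x + MF (A * pderiv j (Qp n)) (pD a) x := by
  rw [(MF_hasFDerivAt A ha x).fderiv]
  exact sum_proj_apply _ j

lemma MF2_fderiv_single (A B : MvPolynomial (Fin n) ℝ) {a b : ℕ → ℝ}
    (ha : goodc a) (hb : goodc b) (x : EuclideanSpace ℝ (Fin n)) (j : Fin n) :
    fderiv ℝ (fun y => MF A a y + MF B b y) x (EuclideanSpace.single j 1)
      = (MF (pderiv j A) a x + MF (A * pderiv j (Qp n)) (pD a) x)
        + (MF (pderiv j B) b x + MF (B * pderiv j (Qp n)) (pD b) x) := by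
  rw [HasFDerivAt.fderiv (f := fun y => MF A a y + MF B b y) ((MF_hasFDerivAt A ha x).add (MF_hasFDerivAt B hb x))]
  rw [ContinuousLinearMap.add_apply, sum_proj_apply, sum_proj_apply]

lemma MF_laplacian (A : MvPolynomial (Fin n) ℝ) {a : ℕ → ℝ} (ha : goodc a)
    (x : EuclideanSpace ℝ (Fin n)) :
    laplacian (MF A a) x
      = ∑ i, ((MF (pderiv i (pderiv i A)) a x
            + MF (pderiv i A * pderiv i (Qp n)) (pD a) x)
          + (MF (pderiv i (A * pderiv i (Qp n))) (pD a) x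
            + MF ((A * pderiv i (Qp n)) * pderiv i (Qp n)) (pD (pD a)) x)) := by
  unfold _root_.laplacian
  apply Finset.sum_congr rfl
  intro i _
  have hinner : (fun y => fderiv ℝ (MF A a) y (EuclideanSpace.single i 1))
      = fun y => MF (pderiv i A) a y + MF (A * pderiv i (Qp n)) (pD a) y :=
    funext fun y => MF_fderiv_single A ha y i
  rw [hinner, MF2_fderiv_single _ _ ha ha.pd x i]

lemma ode_tsum {c : ℕ → ℝ} (hc : goodc c) {A : ℝ}
    (hrec : ∀ k : ℕ, ((k:ℝ)+1) * (4*(k:ℝ) + A) * c (k+1) + c k = 0) (t : ℝ) :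
    pS c t + A * pS (pD c) t + 4 * (t * pS (pD (pD c)) t) = 0 := by
  have hw : Summable fun k : ℕ => (k:ℝ) * pD c k * t ^ k := by
    apply (summable_nat_add_iff 1).1
    apply (((hc.pd.pd).summable t).mul_right t).congr
    intro k
    rw [pD, pD]
    push_cast
    ring
  have h1 : t * pS (pD (pD c)) t = ∑' k : ℕ, (k:ℝ) * pD c k * t ^ k := by
    rw [Summable.tsum_eq_zero_add hw]
    simp only [Nat.cast_zero, zero_mul, zero_add]
    rw [pS, ← tsum_mul_left]
    apply tsum_congr
    intro k
    rw [pD]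
    push_cast
    ring
  rw [h1, pS, pS, ← tsum_mul_left (a := A), ← tsum_mul_left (a := (4:ℝ))]
  rw [← Summable.tsum_add (hc.summable t) (((hc.pd).summable t).mul_left A)]
  rw [← Summable.tsum_add ((hc.summable t).add (((hc.pd).summable t).mul_left A))
    (hw.mul_left 4)]
  have : ∀ k : ℕ, c k * t ^ k + A * (pD c k * t ^ k) + 4 * ((k:ℝ) * pD c k * t ^ k) = 0 := by
    intro k
    have h := hrec k
    rw [pD]
    have : c k * t ^ k + A * (((k:ℝ)+1) * c (k+1) * t ^ k)
        + 4 * ((k:ℝ) * (((k:ℝ)+1) * c (k+1)) * t ^ k)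
        = (((k:ℝ)+1) * (4*(k:ℝ) + A) * c (k+1) + c k) * t ^ k := by ring
    rw [this, h, zero_mul]
  rw [tsum_congr this, tsum_zero]

def bc (μ : ℝ) (k : ℕ) : ℝ :=
  ((-1:ℝ)^k / ((k.factorial:ℝ) * Real.Gamma ((k:ℝ) + μ + 1))) / ((4:ℝ)^k * (2:ℝ)^μ)

lemma bc_rec (μ : ℝ) (hμ : 0 ≤ μ) (k : ℕ) :
    ((k:ℝ)+1) * (4*(k:ℝ) + (4*μ + 4)) * bc μ (k+1) + bc μ k = 0 := by
  have hpos : (0:ℝ) < (k:ℝ) + μ + 1 := by positivity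
  have hΓpos : 0 < Real.Gamma ((k:ℝ) + μ + 1) := Real.Gamma_pos_of_pos hpos
  have hΓ1 : Real.Gamma (((k+1:ℕ):ℝ) + μ + 1) = ((k:ℝ) + μ + 1) * Real.Gamma ((k:ℝ) + μ + 1) := by
    push_cast
    rw [show (k:ℝ) + 1 + μ + 1 = ((k:ℝ) + μ + 1) + 1 by ring, Real.Gamma_add_one hpos.ne']
  have hfact : ((k+1).factorial : ℝ) = ((k:ℝ)+1) * (k.factorial : ℝ) := by
    rw [Nat.factorial_succ]; push_cast; ring
  have hfne : ((k.factorial : ℝ)) ≠ 0 := by positivity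
  have h2ne : ((2:ℝ)^μ) ≠ 0 := (Real.rpow_pos_of_pos (by norm_num) μ).ne'
  have h4ne : ((4:ℝ)^k) ≠ 0 := by positivity
  rw [bc, bc, hΓ1, hfact, pow_succ, pow_succ]
  field_simp
  ring

lemma bc_abs (μ : ℝ) (hμ : 0 ≤ μ) (k : ℕ) :
    |bc μ k| = 1 / (((k.factorial:ℝ) * Real.Gamma ((k:ℝ) + μ + 1)) * ((4:ℝ)^k * (2:ℝ)^μ)) := by
  have hpos : (0:ℝ) < (k:ℝ) + μ + 1 := by positivity
  have hΓpos : 0 < Real.Gamma ((k:ℝ) + μ + 1) := Real.Gamma_pos_of_pos hpos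
  have h2pos : (0:ℝ) < (2:ℝ)^μ := Real.rpow_pos_of_pos (by norm_num) μ
  rw [bc, div_div, abs_div, abs_pow, abs_neg, abs_one, one_pow]
  congr 1
  exact abs_of_pos (by positivity)

lemma bc_good (μ : ℝ) (hμ : 0 ≤ μ) : goodc (bc μ) := by
  apply goodc_of_rec
  intro k
  have hrec := bc_rec μ hμ k
  have h4 : (1:ℝ) ≤ 4*(k:ℝ) + (4*μ + 4) := by
    have : (0:ℝ) ≤ (k:ℝ) := Nat.cast_nonneg k
    linarith
  have heq : ((k:ℝ)+1) * (4*(k:ℝ) + (4*μ + 4)) * bc μ (k+1) = - bc μ k := by linarith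
  have habs := congrArg abs heq
  rw [abs_neg, abs_mul, abs_mul,
    abs_of_nonneg (by positivity : (0:ℝ) ≤ (k:ℝ)+1),
    abs_of_nonneg (by linarith : (0:ℝ) ≤ 4*(k:ℝ) + (4*μ + 4))] at habs
  calc ((k:ℝ)+1) * |bc μ (k+1)|
      = (((k:ℝ)+1) * |bc μ (k+1)|) * 1 := by ring
    _ ≤ (((k:ℝ)+1) * |bc μ (k+1)|) * (4*(k:ℝ) + (4*μ + 4)) := by
        apply mul_le_mul_of_nonneg_left h4 (by positivity)
    _ = ((k:ℝ)+1) * (4*(k:ℝ) + (4*μ + 4)) * |bc μ (k+1)| := by ring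
    _ = |bc μ k| := habs

lemma pS_bc_eq (μ : ℝ) (hμ : 0 ≤ μ) {r : ℝ} (hr : 0 < r) :
    pS (bc μ) (r^2)
      = (∑' k : ℕ, ((-1:ℝ) ^ k / (k.factorial * Real.Gamma ((k:ℝ) + μ + 1))) * (r / 2) ^ (2 * (k : ℝ) + μ)) / r ^ μ := by
  have hr2 : (0:ℝ) < r/2 := by linarith
  have h2pos : (0:ℝ) < (2:ℝ)^μ := Real.rpow_pos_of_pos (by norm_num) μ
  have hrμ : (0:ℝ) < r ^ μ := Real.rpow_pos_of_pos hr μ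
  have hterm : ∀ k : ℕ, ((-1:ℝ) ^ k / (k.factorial * Real.Gamma ((k:ℝ) + μ + 1))) * (r / 2) ^ (2 * (k : ℝ) + μ)
      = (((-1:ℝ) ^ k / (k.factorial * Real.Gamma ((k:ℝ) + μ + 1))) * ((r/2)^2)^k) * (r/2) ^ μ := by
    intro k
    have : (r/2) ^ (2 * (k : ℝ) + μ) = (r/2) ^ (2*(k:ℝ)) * (r/2) ^ μ := Real.rpow_add hr2 _ _
    rw [this]
    have h2 : (r/2) ^ (2*(k:ℝ)) = ((r/2)^2)^k := by
      rw [show (2*(k:ℝ)) = ((2*k : ℕ) : ℝ) by push_cast; ring, Real.rpow_natCast, pow_mul]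
    rw [h2]
    ring
  have hbj : (∑' k : ℕ, ((-1:ℝ) ^ k / (k.factorial * Real.Gamma ((k:ℝ) + μ + 1))) * (r / 2) ^ (2 * (k : ℝ) + μ))
      = (∑' k : ℕ, ((-1:ℝ) ^ k / (k.factorial * Real.Gamma ((k:ℝ) + μ + 1))) * ((r/2)^2)^k) * (r/2) ^ μ := by
    rw [← tsum_mul_right]
    exact tsum_congr hterm
  have hps : pS (bc μ) (r^2)
      = (∑' k : ℕ, ((-1:ℝ) ^ k / (k.factorial * Real.Gamma ((k:ℝ) + μ + 1))) * ((r/2)^2)^k) * ((2:ℝ)^μ)⁻¹ := by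
    rw [pS, ← tsum_mul_right]
    apply tsum_congr
    intro k
    rw [bc]
    have h4 : ((r:ℝ)^2)^k / (4:ℝ)^k = ((r/2)^2)^k := by
      rw [← div_pow]
      congr 1
      ring
    rw [← h4]
    ring
  rw [hps, hbj]
  rw [Real.div_rpow (by linarith : (0:ℝ) ≤ r) (by norm_num : (0:ℝ) ≤ 2)]
  field_simp

lemma hQp2 (i : Fin n) : pderiv i (pderiv i (Qp n)) = (2 : MvPolynomial (Fin n) ℝ) := by
  rw [pderiv_Qp, pderiv_mul, pderiv_X_self,
    show (2 : MvPolynomial (Fin n) ℝ) = C 2 from (map_ofNat C 2).symm, pderiv_C]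
  simp

lemma pe_Qp (x : EuclideanSpace ℝ (Fin n)) : pe (Qp n) x = ∑ i, x i ^ 2 := by
  simp [pe, Qp]

lemma euler_eval {ℓ : ℕ} {P : MvPolynomial (Fin n) ℝ} (hP : P.IsHomogeneous ℓ)
    (x : EuclideanSpace ℝ (Fin n)) :
    ∑ i, x i * pe (pderiv i P) x = (ℓ:ℝ) * pe P x := by
  have h := congrArg (fun p => pe p x) (euler_poly hP)
  simpa [pe, smul_eq_mul] using h

lemma laplacian_total {ℓ : ℕ} {P : MvPolynomial (Fin n) ℝ} (hP : P.IsHomogeneous ℓ)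
    (hharm : (∑ i, pderiv i (pderiv i P)) = 0) {a : ℕ → ℝ} (ha : goodc a)
    (x : EuclideanSpace ℝ (Fin n)) :
    laplacian (MF P a) x
      = pe P x * ((4*(ℓ:ℝ) + 2*(n:ℝ)) * pS (pD a) (pe (Qp n) x)
          + 4 * (pe (Qp n) x * pS (pD (pD a)) (pe (Qp n) x))) := by
  rw [MF_laplacian P ha x]
  have expand : ∀ i : Fin n,
      ((MF (pderiv i (pderiv i P)) a x + MF (pderiv i P * pderiv i (Qp n)) (pD a) x)
      + (MF (pderiv i (P * pderiv i (Qp n))) (pD a) x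
        + MF ((P * pderiv i (Qp n)) * pderiv i (Qp n)) (pD (pD a)) x))
      = pe (pderiv i (pderiv i P)) x * pS a (pe (Qp n) x)
        + x i * pe (pderiv i P) x * (4 * pS (pD a) (pe (Qp n) x))
        + x i ^ 2 * (4 * pe P x * pS (pD (pD a)) (pe (Qp n) x))
        + 2 * pe P x * pS (pD a) (pe (Qp n) x) := by
    intro i
    rw [MF, MF, MF, MF, pderiv_mul (f := P) (g := pderiv i (Qp n)), hQp2 i, pderiv_Qp i]
    simp only [pe, map_add, map_mul, eval_X, eval_ofNat]
    ring
  rw [Finset.sum_congr rfl fun i _ => expand i]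
  rw [Finset.sum_add_distrib, Finset.sum_add_distrib, Finset.sum_add_distrib]
  rw [← Finset.sum_mul, ← Finset.sum_mul, ← Finset.sum_mul]
  have h1 : (∑ i, pe (pderiv i (pderiv i P)) x) = 0 := by
    simp only [pe, ← map_sum]
    rw [hharm, map_zero]
  rw [h1, euler_eval hP x]
  rw [show (∑ i, x i ^ 2) = pe (Qp n) x from (pe_Qp x).symm]
  rw [Finset.sum_const, Finset.card_univ, Fintype.card_fin, nsmul_eq_mul]
  ring

theorem stmt4 (n : ℕ) (hn : 2 ≤ n) (ℓ : ℕ)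
    (ν : ℝ) (hν : ν = ((n : ℝ) - 2) / 2)
    (P : MvPolynomial (Fin n) ℝ) (hP : P.IsHomogeneous ℓ) (hPharm : polyLaplacian P = 0) :
    ∃ f : EuclideanSpace ℝ (Fin n) → ℝ, ContDiff ℝ (⊤ : ℕ∞) f ∧
      (∀ x : EuclideanSpace ℝ (Fin n), x ≠ 0 →
        f x = MvPolynomial.eval (fun i => x i) P * besselJ ((ℓ : ℝ) + ν) ‖x‖ / ‖x‖ ^ ((ℓ : ℝ) + ν)) ∧
      ∀ x : EuclideanSpace ℝ (Fin n), laplacian f x + f x = 0 := by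
  have hn2 : (2:ℝ) ≤ (n:ℝ) := by exact_mod_cast hn
  set μ : ℝ := (ℓ:ℝ) + ν with hμdef
  have hμ0 : 0 ≤ μ := by
    rw [hμdef, hν]
    have : (0:ℝ) ≤ (ℓ:ℝ) := Nat.cast_nonneg ℓ
    linarith
  have hgood : goodc (bc μ) := bc_good μ hμ0
  have hharm' : (∑ i, pderiv i (pderiv i P)) = 0 := hPharm
  refine ⟨MF P (bc μ), MF_contDiff P hgood, ?_, ?_⟩
  · intro x hx
    have hr : 0 < ‖x‖ := norm_pos_iff.2 hx
    have hq : pe (Qp n) x = ‖x‖^2 := by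
      rw [pe_Qp, EuclideanSpace.norm_eq, Real.sq_sqrt (by positivity)]
      exact Finset.sum_congr rfl fun i _ => by rw [Real.norm_eq_abs, sq_abs]
    show pe P x * pS (bc μ) (pe (Qp n) x) = _
    rw [hq, pS_bc_eq μ hμ0 hr, besselJ]
    rw [mul_div_assoc]
    rfl
  · intro x
    have hlap : laplacian (MF P (bc μ)) x
        = pe P x * ((4*(ℓ:ℝ) + 2*(n:ℝ)) * pS (pD (bc μ)) (pe (Qp n) x)
            + 4 * (pe (Qp n) x * pS (pD (pD (bc μ))) (pe (Qp n) x))) :=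
      laplacian_total hP hharm' hgood x
    have hA : 4*(ℓ:ℝ) + 2*(n:ℝ) = 4*μ + 4 := by rw [hμdef, hν]; ring
    have hode := ode_tsum hgood (bc_rec μ hμ0) (pe (Qp n) x)
    have hfx : MF P (bc μ) x = pe P x * pS (bc μ) (pe (Qp n) x) := rfl
    rw [hlap, hfx, hA]
    calc pe P x * ((4*μ + 4) * pS (pD (bc μ)) (pe (Qp n) x)
            + 4 * (pe (Qp n) x * pS (pD (pD (bc μ))) (pe (Qp n) x)))
          + pe P x * pS (bc μ) (pe (Qp n) x)
        = pe P x * (pS (bc μ) (pe (Qp n) x)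
            + (4*μ + 4) * pS (pD (bc μ)) (pe (Qp n) x)
            + 4 * (pe (Qp n) x * pS (pD (pD (bc μ))) (pe (Qp n) x))) := by ring
      _ = pe P x * 0 := by rw [hode]
      _ = 0 := by ring
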